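/- Let H₁ and H₂ be groups acting by k-algebra automorphisms on k-algebras A₁ and A₂ respectively, and let P be an (H₁ × H₂)-prime ideal of A₁ ⊗_k A₂. If P₁ and P₂ denote the preimages of P under the canonical maps A₁ → A₁ ⊗_k A₂ (a ↦ a ⊗ 1) and A₂ → A₁ ⊗_k A₂ (a ↦ 1 ⊗ a), and if A₁ is noetherian (so that P₁ contains a finite product of H₁-primes containing it), then P₁ is an H₁-prime ideal of A₁ and P₂ is an H₂-prime ideal of A₂. -/

import Mathlib

open TensorProduct

/-- A two-sided ideal `Q` of `R` is `G`-prime (with respect to an action `φ` of `G` on `R` by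
ring automorphisms) if it is proper, `G`-invariant, and whenever `I, J` are `G`-invariant
two-sided ideals with `I * J ⊆ Q` then `I ⊆ Q` or `J ⊆ Q`. -/
def IsGPrimeIdeal {R : Type*} [Ring R] {G : Type*} [Group G]
    (φ : G →* (R ≃+* R)) (Q : TwoSidedIdeal R) : Prop :=
  Q ≠ ⊤ ∧ (∀ g : G, ∀ x ∈ Q, φ g x ∈ Q) ∧
    ∀ I J : TwoSidedIdeal R, (∀ g : G, ∀ x ∈ I, φ g x ∈ I) → (∀ g : G, ∀ x ∈ J, φ g x ∈ J) →
      (∀ x ∈ I, ∀ y ∈ J, x * y ∈ Q) → I ≤ Q ∨ J ≤ Q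

section Aux

lemma auxEqTop {R : Type*} [Ring R] (P : TwoSidedIdeal R) (h : (1 : R) ∈ P) : P = ⊤ :=
  eq_top_iff.2 fun z _ => by simpa using P.mul_mem_left z 1 h

variable {k : Type*} [Field k] {A₁ A₂ : Type*} [Ring A₁] [Ring A₂] [Algebra k A₁] [Algebra k A₂]

/-! ### Lifting an ideal of the right factor -/

def auxRset (I : TwoSidedIdeal A₂) : Set (A₁ ⊗[k] A₂) :=
  {z | ∃ a : A₁, ∃ x ∈ I, z = a ⊗ₜ[k] x}

lemma auxR_mul_left (I : TwoSidedIdeal A₂) (z w : A₁ ⊗[k] A₂)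
    (hw : w ∈ AddSubgroup.closure (auxRset (A₁ := A₁) (k := k) I)) :
    z * w ∈ AddSubgroup.closure (auxRset (A₁ := A₁) (k := k) I) := by
  induction hw using AddSubgroup.closure_induction with
  | mem w hw =>
      obtain ⟨a, x, hx, rfl⟩ := hw
      induction z using TensorProduct.induction_on with
      | zero => simpa using AddSubgroup.zero_mem _
      | tmul b c =>
          refine AddSubgroup.subset_closure ⟨b * a, c * x, I.mul_mem_left _ _ hx, ?_⟩
          rw [Algebra.TensorProduct.tmul_mul_tmul]
      | add z₁ z₂ h₁ h₂ => rw [add_mul]; exact AddSubgroup.add_mem _ h₁ h₂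
  | zero => simpa using AddSubgroup.zero_mem _
  | add a b ha hb iha ihb => rw [mul_add]; exact AddSubgroup.add_mem _ iha ihb
  | neg a ha iha => rw [mul_neg]; exact AddSubgroup.neg_mem _ iha

lemma auxR_mul_right (I : TwoSidedIdeal A₂) (z w : A₁ ⊗[k] A₂)
    (hw : w ∈ AddSubgroup.closure (auxRset (A₁ := A₁) (k := k) I)) :
    w * z ∈ AddSubgroup.closure (auxRset (A₁ := A₁) (k := k) I) := by
  induction hw using AddSubgroup.closure_induction with
  | mem w hw =>
      obtain ⟨a, x, hx, rfl⟩ := hw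
      induction z using TensorProduct.induction_on with
      | zero => simpa using AddSubgroup.zero_mem _
      | tmul b c =>
          refine AddSubgroup.subset_closure ⟨a * b, x * c, I.mul_mem_right _ _ hx, ?_⟩
          rw [Algebra.TensorProduct.tmul_mul_tmul]
      | add z₁ z₂ h₁ h₂ => rw [mul_add]; exact AddSubgroup.add_mem _ h₁ h₂
  | zero => simpa using AddSubgroup.zero_mem _
  | add a b ha hb iha ihb => rw [add_mul]; exact AddSubgroup.add_mem _ iha ihb
  | neg a ha iha => rw [neg_mul]; exact AddSubgroup.neg_mem _ iha

def auxLiftR (I : TwoSidedIdeal A₂) : TwoSidedIdeal (A₁ ⊗[k] A₂) :=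
  TwoSidedIdeal.mk' (AddSubgroup.closure (auxRset (A₁ := A₁) (k := k) I))
    (AddSubgroup.zero_mem _) (fun hx hy => AddSubgroup.add_mem _ hx hy)
    (fun hx => AddSubgroup.neg_mem _ hx)
    (fun {x y} hy => auxR_mul_left I x y hy)
    (fun {x y} hx => auxR_mul_right I y x hx)

lemma mem_auxLiftR (I : TwoSidedIdeal A₂) (z : A₁ ⊗[k] A₂) :
    z ∈ auxLiftR (k := k) I ↔ z ∈ AddSubgroup.closure (auxRset (A₁ := A₁) (k := k) I) :=
  TwoSidedIdeal.mem_mk' _ _ _ _ _ _ _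

lemma auxR_prod (I J : TwoSidedIdeal A₂) (P : TwoSidedIdeal (A₁ ⊗[k] A₂))
    (h : ∀ a : A₁, ∀ x ∈ I, ∀ b : A₁, ∀ y ∈ J, (a ⊗ₜ[k] x) * (b ⊗ₜ[k] y) ∈ P)
    {u v : A₁ ⊗[k] A₂} (hu : u ∈ AddSubgroup.closure (auxRset (A₁ := A₁) (k := k) I))
    (hv : v ∈ AddSubgroup.closure (auxRset (A₁ := A₁) (k := k) J)) : u * v ∈ P := by
  induction hu using AddSubgroup.closure_induction with
  | mem u hu =>
      obtain ⟨a, x, hx, rfl⟩ := hu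
      induction hv using AddSubgroup.closure_induction with
      | mem v hv => obtain ⟨b, y, hy, rfl⟩ := hv; exact h a x hx b y hy
      | zero => simpa using P.zero_mem
      | add c d hc hd ihc ihd => rw [mul_add]; exact P.add_mem ihc ihd
      | neg c hc ihc => rw [mul_neg]; exact P.neg_mem ihc
  | zero => simpa using P.zero_mem
  | add c d hc hd ihc ihd => rw [add_mul]; exact P.add_mem ihc ihd
  | neg c hc ihc => rw [neg_mul]; exact P.neg_mem ihc

lemma auxR_inv (I : TwoSidedIdeal A₂) (e₁ : A₁ ≃ₐ[k] A₁) (e₂ : A₂ ≃ₐ[k] A₂)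
    (hI : ∀ x ∈ I, e₂ x ∈ I) {z : A₁ ⊗[k] A₂}
    (hz : z ∈ AddSubgroup.closure (auxRset (A₁ := A₁) (k := k) I)) :
    (Algebra.TensorProduct.congr e₁ e₂).toRingEquiv z ∈
      AddSubgroup.closure (auxRset (A₁ := A₁) (k := k) I) := by
  induction hz using AddSubgroup.closure_induction with
  | mem z hz =>
      obtain ⟨a, x, hx, rfl⟩ := hz
      refine AddSubgroup.subset_closure ⟨e₁ a, e₂ x, hI x hx, ?_⟩
      simp [Algebra.TensorProduct.congr_apply]
  | zero => simpa using AddSubgroup.zero_mem _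
  | add a b ha hb iha ihb => rw [map_add]; exact AddSubgroup.add_mem _ iha ihb
  | neg a ha iha => rw [map_neg]; exact AddSubgroup.neg_mem _ iha

/-! ### Lifting an ideal of the left factor -/

def auxLset (I : TwoSidedIdeal A₁) : Set (A₁ ⊗[k] A₂) :=
  {z | ∃ x ∈ I, ∃ a : A₂, z = x ⊗ₜ[k] a}

lemma auxL_mul_left (I : TwoSidedIdeal A₁) (z w : A₁ ⊗[k] A₂)
    (hw : w ∈ AddSubgroup.closure (auxLset (A₂ := A₂) (k := k) I)) :
    z * w ∈ AddSubgroup.closure (auxLset (A₂ := A₂) (k := k) I) := by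
  induction hw using AddSubgroup.closure_induction with
  | mem w hw =>
      obtain ⟨x, hx, a, rfl⟩ := hw
      induction z using TensorProduct.induction_on with
      | zero => simpa using AddSubgroup.zero_mem _
      | tmul b c =>
          refine AddSubgroup.subset_closure ⟨b * x, I.mul_mem_left _ _ hx, c * a, ?_⟩
          rw [Algebra.TensorProduct.tmul_mul_tmul]
      | add z₁ z₂ h₁ h₂ => rw [add_mul]; exact AddSubgroup.add_mem _ h₁ h₂
  | zero => simpa using AddSubgroup.zero_mem _
  | add a b ha hb iha ihb => rw [mul_add]; exact AddSubgroup.add_mem _ iha ihb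
  | neg a ha iha => rw [mul_neg]; exact AddSubgroup.neg_mem _ iha

lemma auxL_mul_right (I : TwoSidedIdeal A₁) (z w : A₁ ⊗[k] A₂)
    (hw : w ∈ AddSubgroup.closure (auxLset (A₂ := A₂) (k := k) I)) :
    w * z ∈ AddSubgroup.closure (auxLset (A₂ := A₂) (k := k) I) := by
  induction hw using AddSubgroup.closure_induction with
  | mem w hw =>
      obtain ⟨x, hx, a, rfl⟩ := hw
      induction z using TensorProduct.induction_on with
      | zero => simpa using AddSubgroup.zero_mem _
      | tmul b c =>
          refine AddSubgroup.subset_closure ⟨x * b, I.mul_mem_right _ _ hx, a * c, ?_⟩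
          rw [Algebra.TensorProduct.tmul_mul_tmul]
      | add z₁ z₂ h₁ h₂ => rw [mul_add]; exact AddSubgroup.add_mem _ h₁ h₂
  | zero => simpa using AddSubgroup.zero_mem _
  | add a b ha hb iha ihb => rw [add_mul]; exact AddSubgroup.add_mem _ iha ihb
  | neg a ha iha => rw [neg_mul]; exact AddSubgroup.neg_mem _ iha

def auxLiftL (I : TwoSidedIdeal A₁) : TwoSidedIdeal (A₁ ⊗[k] A₂) :=
  TwoSidedIdeal.mk' (AddSubgroup.closure (auxLset (A₂ := A₂) (k := k) I))
    (AddSubgroup.zero_mem _) (fun hx hy => AddSubgroup.add_mem _ hx hy)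
    (fun hx => AddSubgroup.neg_mem _ hx)
    (fun {x y} hy => auxL_mul_left I x y hy)
    (fun {x y} hx => auxL_mul_right I y x hx)

lemma mem_auxLiftL (I : TwoSidedIdeal A₁) (z : A₁ ⊗[k] A₂) :
    z ∈ auxLiftL (k := k) I ↔ z ∈ AddSubgroup.closure (auxLset (A₂ := A₂) (k := k) I) :=
  TwoSidedIdeal.mem_mk' _ _ _ _ _ _ _

lemma auxL_prod (I J : TwoSidedIdeal A₁) (P : TwoSidedIdeal (A₁ ⊗[k] A₂))
    (h : ∀ x ∈ I, ∀ a : A₂, ∀ y ∈ J, ∀ b : A₂, (x ⊗ₜ[k] a) * (y ⊗ₜ[k] b) ∈ P)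
    {u v : A₁ ⊗[k] A₂} (hu : u ∈ AddSubgroup.closure (auxLset (A₂ := A₂) (k := k) I))
    (hv : v ∈ AddSubgroup.closure (auxLset (A₂ := A₂) (k := k) J)) : u * v ∈ P := by
  induction hu using AddSubgroup.closure_induction with
  | mem u hu =>
      obtain ⟨x, hx, a, rfl⟩ := hu
      induction hv using AddSubgroup.closure_induction with
      | mem v hv => obtain ⟨y, hy, b, rfl⟩ := hv; exact h x hx a y hy b
      | zero => simpa using P.zero_mem
      | add c d hc hd ihc ihd => rw [mul_add]; exact P.add_mem ihc ihd
      | neg c hc ihc => rw [mul_neg]; exact P.neg_mem ihc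
  | zero => simpa using P.zero_mem
  | add c d hc hd ihc ihd => rw [add_mul]; exact P.add_mem ihc ihd
  | neg c hc ihc => rw [neg_mul]; exact P.neg_mem ihc

lemma auxL_inv (I : TwoSidedIdeal A₁) (e₁ : A₁ ≃ₐ[k] A₁) (e₂ : A₂ ≃ₐ[k] A₂)
    (hI : ∀ x ∈ I, e₁ x ∈ I) {z : A₁ ⊗[k] A₂}
    (hz : z ∈ AddSubgroup.closure (auxLset (A₂ := A₂) (k := k) I)) :
    (Algebra.TensorProduct.congr e₁ e₂).toRingEquiv z ∈
      AddSubgroup.closure (auxLset (A₂ := A₂) (k := k) I) := by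
  induction hz using AddSubgroup.closure_induction with
  | mem z hz =>
      obtain ⟨x, hx, a, rfl⟩ := hz
      refine AddSubgroup.subset_closure ⟨e₁ x, hI x hx, e₂ a, ?_⟩
      simp [Algebra.TensorProduct.congr_apply]
  | zero => simpa using AddSubgroup.zero_mem _
  | add a b ha hb iha ihb => rw [map_add]; exact AddSubgroup.add_mem _ iha ihb
  | neg a ha iha => rw [map_neg]; exact AddSubgroup.neg_mem _ iha

end Aux

/-- If `P` is an `(H₁ × H₂)`-prime ideal of `A₁ ⊗[k] A₂`, and the contraction
`P₁` of `P` to `A₁` contains a finite product of `H₁`-primes containing it (a consequence of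
`A₁` being noetherian), then the contractions `P₁` and `P₂` are `H₁`-prime and `H₂`-prime
respectively. -/
theorem contraction_of_tensor_G_prime
    {k : Type*} [Field k] {A₁ A₂ : Type*} [Ring A₁] [Ring A₂] [Algebra k A₁] [Algebra k A₂]
    {H₁ H₂ : Type*} [Group H₁] [Group H₂]
    (φ₁ : H₁ →* (A₁ ≃ₐ[k] A₁)) (φ₂ : H₂ →* (A₂ ≃ₐ[k] A₂))
    (φ : H₁ × H₂ →* ((A₁ ⊗[k] A₂) ≃+* (A₁ ⊗[k] A₂)))
    (hφ : ∀ h : H₁ × H₂, φ h = (Algebra.TensorProduct.congr (φ₁ h.1) (φ₂ h.2)).toRingEquiv)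
    (P : TwoSidedIdeal (A₁ ⊗[k] A₂))
    (hP : IsGPrimeIdeal φ P)
    (P₁ : TwoSidedIdeal A₁) (P₂ : TwoSidedIdeal A₂)
    (hP₁ : P₁ = P.comap (Algebra.TensorProduct.includeLeft (R := k) (S := k)
      (A := A₁) (B := A₂) : A₁ →ₐ[k] A₁ ⊗[k] A₂))
    (hP₂ : P₂ = P.comap (Algebra.TensorProduct.includeRight (R := k)
      (A := A₁) (B := A₂) : A₂ →ₐ[k] A₁ ⊗[k] A₂))
    -- consequence of `A₁` being noetherian: every `H₁`-ideal contains a finite product of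
    -- `H₁`-primes containing it
    (hnoeth : ∃ (t : ℕ) (Q : Fin (t + 1) → TwoSidedIdeal A₁),
      (∀ i, IsGPrimeIdeal (MonoidHom.comp (⟨⟨fun e => e.toRingEquiv, rfl⟩,
          fun _ _ => rfl⟩ : (A₁ ≃ₐ[k] A₁) →* (A₁ ≃+* A₁)) φ₁) (Q i)) ∧
      (∀ i, P₁ ≤ Q i) ∧
      (∀ x : Fin (t + 1) → A₁, (∀ i, x i ∈ Q i) → (List.ofFn x).prod ∈ P₁)) :
    IsGPrimeIdeal (MonoidHom.comp (⟨⟨fun e => e.toRingEquiv, rfl⟩,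
        fun _ _ => rfl⟩ : (A₁ ≃ₐ[k] A₁) →* (A₁ ≃+* A₁)) φ₁) P₁ ∧
    IsGPrimeIdeal (MonoidHom.comp (⟨⟨fun e => e.toRingEquiv, rfl⟩,
        fun _ _ => rfl⟩ : (A₂ ≃ₐ[k] A₂) →* (A₂ ≃+* A₂)) φ₂) P₂ := by
  have hmemP₁ : ∀ x : A₁, x ∈ P₁ ↔ x ⊗ₜ[k] (1 : A₂) ∈ P := by
    intro x
    rw [hP₁, TwoSidedIdeal.mem_comap]
    rfl
  have hmemP₂ : ∀ x : A₂, x ∈ P₂ ↔ (1 : A₁) ⊗ₜ[k] x ∈ P := by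
    intro x
    rw [hP₂, TwoSidedIdeal.mem_comap]
    rfl
  constructor
  · refine ⟨?_, ?_, ?_⟩
    · -- P₁ proper
      intro h
      apply hP.1
      apply auxEqTop
      have : (1 : A₁) ∈ P₁ := by rw [h]; trivial
      rw [hmemP₁] at this
      simpa [Algebra.TensorProduct.one_def] using this
    · -- P₁ invariant
      intro g x hx
      show (φ₁ g).toRingEquiv x ∈ P₁
      rw [hmemP₁] at hx ⊢
      have := hP.2.1 (g, 1) _ hx
      rw [hφ (g, 1)] at this
      simpa [Algebra.TensorProduct.congr_apply] using this
    · -- P₁ prime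
      intro I J hIinv hJinv hprod
      have hI' : ∀ g : H₁ × H₂, ∀ z ∈ auxLiftL (A₂ := A₂) (k := k) I, φ g z ∈ auxLiftL (A₂ := A₂) (k := k) I := by
        intro g z hz
        rw [mem_auxLiftL] at hz ⊢
        rw [hφ g]
        exact auxL_inv I (φ₁ g.1) (φ₂ g.2) (fun x hx => hIinv g.1 x hx) hz
      have hJ' : ∀ g : H₁ × H₂, ∀ z ∈ auxLiftL (A₂ := A₂) (k := k) J, φ g z ∈ auxLiftL (A₂ := A₂) (k := k) J := by
        intro g z hz
        rw [mem_auxLiftL] at hz ⊢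
        rw [hφ g]
        exact auxL_inv J (φ₁ g.1) (φ₂ g.2) (fun x hx => hJinv g.1 x hx) hz
      have hprod' : ∀ u ∈ auxLiftL (A₂ := A₂) (k := k) I, ∀ v ∈ auxLiftL (A₂ := A₂) (k := k) J,
          u * v ∈ P := by
        intro u hu v hv
        rw [mem_auxLiftL] at hu hv
        refine auxL_prod I J P ?_ hu hv
        intro x hx a y hy b
        have h1 : (x * y) ⊗ₜ[k] (1 : A₂) ∈ P := (hmemP₁ _).1 (hprod x hx y hy)
        have h2 := P.mul_mem_right _ ((1 : A₁) ⊗ₜ[k] (a * b)) h1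
        rw [Algebra.TensorProduct.tmul_mul_tmul, mul_one, one_mul] at h2
        rwa [Algebra.TensorProduct.tmul_mul_tmul]
      rcases hP.2.2 _ _ hI' hJ' hprod' with h | h
      · left
        intro x hx
        rw [hmemP₁]
        exact h ((mem_auxLiftL I _).2 (AddSubgroup.subset_closure ⟨x, hx, 1, rfl⟩))
      · right
        intro x hx
        rw [hmemP₁]
        exact h ((mem_auxLiftL J _).2 (AddSubgroup.subset_closure ⟨x, hx, 1, rfl⟩))
  · refine ⟨?_, ?_, ?_⟩
    · intro h
      apply hP.1
      apply auxEqTop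
      have : (1 : A₂) ∈ P₂ := by rw [h]; trivial
      rw [hmemP₂] at this
      simpa [Algebra.TensorProduct.one_def] using this
    · intro g x hx
      show (φ₂ g).toRingEquiv x ∈ P₂
      rw [hmemP₂] at hx ⊢
      have := hP.2.1 (1, g) _ hx
      rw [hφ (1, g)] at this
      simpa [Algebra.TensorProduct.congr_apply] using this
    · intro I J hIinv hJinv hprod
      have hI' : ∀ g : H₁ × H₂, ∀ z ∈ auxLiftR (A₁ := A₁) (k := k) I, φ g z ∈ auxLiftR (A₁ := A₁) (k := k) I := by
        intro g z hz
        rw [mem_auxLiftR] at hz ⊢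
        rw [hφ g]
        exact auxR_inv I (φ₁ g.1) (φ₂ g.2) (fun x hx => hIinv g.2 x hx) hz
      have hJ' : ∀ g : H₁ × H₂, ∀ z ∈ auxLiftR (A₁ := A₁) (k := k) J, φ g z ∈ auxLiftR (A₁ := A₁) (k := k) J := by
        intro g z hz
        rw [mem_auxLiftR] at hz ⊢
        rw [hφ g]
        exact auxR_inv J (φ₁ g.1) (φ₂ g.2) (fun x hx => hJinv g.2 x hx) hz
      have hprod' : ∀ u ∈ auxLiftR (A₁ := A₁) (k := k) I, ∀ v ∈ auxLiftR (A₁ := A₁) (k := k) J,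
          u * v ∈ P := by
        intro u hu v hv
        rw [mem_auxLiftR] at hu hv
        refine auxR_prod I J P ?_ hu hv
        intro a x hx b y hy
        have h1 : (1 : A₁) ⊗ₜ[k] (x * y) ∈ P := (hmemP₂ _).1 (hprod x hx y hy)
        have h2 := P.mul_mem_left ((a * b) ⊗ₜ[k] (1 : A₂)) _ h1
        rw [Algebra.TensorProduct.tmul_mul_tmul, mul_one, one_mul] at h2
        rwa [Algebra.TensorProduct.tmul_mul_tmul]
      rcases hP.2.2 _ _ hI' hJ' hprod' with h | h
      · left
        intro x hx
        rw [hmemP₂]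
        exact h ((mem_auxLiftR I _).2 (AddSubgroup.subset_closure ⟨1, x, hx, rfl⟩))
      · right
        intro x hx
        rw [hmemP₂]
        exact h ((mem_auxLiftR J _).2 (AddSubgroup.subset_closure ⟨1, x, hx, rfl⟩))
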